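/- Let A be a point configuration containing the origin with label 0, and let ω be a height vector with ω₀ ≤ ωⱼ for all j such that the lifted lower faces define a regular triangulation T(A, ω). Then lifting the vector configuration A_VC = A \ {0} by the heights ωⱼ - ω₀ yields the regular triangulation of A_VC whose cells are exactly {σ : σ ∪ {0} ∈ T(A, ω)}. -/
import Mathlib


/-- Let `A` be a point configuration `q : Fin (n+1) → ℝᵐ` containing
the origin with label `0` (`q 0 = 0`), and let `ω` be a height vector with
`ω 0 ≤ ω j` for all `j`.  A subset `σ` of labels is a cell of the regular subdivision
`T(A, ω)` exactly when some affine functional `x ↦ ⟨α, x⟩ + c` agrees with the heights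
on `σ` and lies strictly below them off `σ` (the lower-face criterion); similarly a
cell of the regular subdivision of the vector configuration `A_VC = A \ {0}` with
heights `ωⱼ - ω₀` is witnessed by a linear functional `ψ`.  Then lifting `A_VC` by
`ωⱼ - ω₀` yields exactly the cells `{σ : σ ∪ {0} ∈ T(A, ω)}`: for every `σ` with
`0 ∉ σ`, `σ` is a cell of `T(A_VC, ω - ω₀)` iff `σ ∪ {0}` is a cell of `T(A, ω)`. -/
theorem stmt_13 {m n : ℕ} (q : Fin (n + 1) → (Fin m → ℝ)) (hq0 : q 0 = 0)
    (ω : Fin (n + 1) → ℝ) (hω : ∀ j, ω 0 ≤ ω j)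
    (σ : Finset (Fin (n + 1))) (hσ : 0 ∉ σ) :
    (∃ ψ : Fin m → ℝ,
        (∀ j ∈ σ, (∑ i, ψ i * q j i) = ω j - ω 0) ∧
        (∀ j, j ∉ σ → j ≠ 0 → (∑ i, ψ i * q j i) < ω j - ω 0))
      ↔ (∃ α : Fin m → ℝ, ∃ c : ℝ,
        (∀ j ∈ insert 0 σ, (∑ i, α i * q j i) + c = ω j) ∧
        (∀ j ∉ insert 0 σ, (∑ i, α i * q j i) + c < ω j)) := by
  constructor
  · rintro ⟨ψ, h1, h2⟩
    refine ⟨ψ, ω 0, ?_, ?_⟩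
    · intro j hj
      rcases Finset.mem_insert.1 hj with h | h
      · subst h; simp [hq0]
      · have := h1 j h; linarith
    · intro j hj
      have hj0 : j ≠ 0 := fun h => hj (by simp [h])
      have hjσ : j ∉ σ := fun h => hj (Finset.mem_insert_of_mem h)
      have := h2 j hjσ hj0; linarith
  · rintro ⟨α, c, h1, h2⟩
    have hc : c = ω 0 := by
      have := h1 0 (Finset.mem_insert_self 0 σ)
      simpa [hq0] using this
    refine ⟨α, ?_, ?_⟩
    · intro j hj
      have := h1 j (Finset.mem_insert_of_mem hj); linarith
    · intro j hjσ hj0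
      have : j ∉ insert 0 σ := by
        simp [Finset.mem_insert, hj0, hjσ]
      have := h2 j this; linarith
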